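/- Let M, N be positive semidefinite n×n complex matrices with M = AA* and N = BB*, and let y ∈ ℂ^n be the vector of row sums of A∘B. Then M∘N ⪰ (A∘B)(A∘B)* ⪰ (1/n)·y·y*, where ∘ denotes the entrywise (Schur) product and ⪰ denotes the positive semidefinite (Loewner) order. -/

import Mathlib

open scoped ComplexOrder

theorem schur_product_lower_bound {n : ℕ} (M N A B : Matrix (Fin n) (Fin n) ℂ)
    (hMpos : M.PosSemidef) (hNpos : N.PosSemidef)
    (hM : M = A * A.conjTranspose) (hN : N = B * B.conjTranspose)
    (y : Fin n → ℂ) (hy : ∀ j, y j = ∑ k, Matrix.hadamard A B j k) :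
    (Matrix.hadamard M N -
      Matrix.hadamard A B * (Matrix.hadamard A B).conjTranspose).PosSemidef ∧
    (Matrix.hadamard A B * (Matrix.hadamard A B).conjTranspose -
      (n : ℂ)⁻¹ • Matrix.vecMulVec y (star y)).PosSemidef := by
  set C : Matrix (Fin n) (Fin n) ℂ := Matrix.hadamard A B with hC
  constructor
  · -- M∘N - C Cᴴ = V Vᴴ with V j (l,m) = if l = m then 0 else A j l * B j m
    set V : Matrix (Fin n) (Fin n × Fin n) ℂ :=
      Matrix.of fun j p => if p.1 = p.2 then 0 else A j p.1 * B j p.2 with hV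
    have key : Matrix.hadamard M N - C * C.conjTranspose = V * V.conjTranspose := by
      ext j k
      have hsplit : ∀ g : Fin n × Fin n → ℂ,
          ∑ p : Fin n × Fin n, (if p.1 = p.2 then 0 else g p)
            = (∑ p : Fin n × Fin n, g p) - ∑ l, g (l, l) := by
        intro g
        have h1 : ∀ p : Fin n × Fin n,
            (if p.1 = p.2 then 0 else g p) = g p - (if p.1 = p.2 then g p else 0) := by
          intro p; by_cases h : p.1 = p.2 <;> simp [h]
        rw [Finset.sum_congr rfl fun p _ => h1 p, Finset.sum_sub_distrib]
        congr 1
        rw [Fintype.sum_prod_type]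
        exact Finset.sum_congr rfl fun l _ => by simp
      simp only [Matrix.sub_apply, Matrix.hadamard_apply, Matrix.mul_apply,
        Matrix.conjTranspose_apply, hM, hN, hV, hC, Matrix.of_apply]
      have h2 : ∑ p : Fin n × Fin n,
          (if p.1 = p.2 then 0 else A j p.1 * B j p.2) *
            star (if p.1 = p.2 then (0:ℂ) else A k p.1 * B k p.2)
          = ∑ p : Fin n × Fin n, (if p.1 = p.2 then 0
              else (A j p.1 * B j p.2) * star (A k p.1 * B k p.2)) := by
        refine Finset.sum_congr rfl fun p _ => ?_
        by_cases h : p.1 = p.2 <;> simp [h]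
      rw [h2, hsplit, Fintype.sum_prod_type, Finset.sum_mul_sum]
      congr 1
      · refine Finset.sum_congr rfl fun l _ => Finset.sum_congr rfl fun m _ => ?_
        simp only [star_mul']
        try ring
    rw [key]
    exact Matrix.posSemidef_self_mul_conjTranspose V
  · -- C Cᴴ - (1/n) y yᴴ = (C P)(C P)ᴴ with P = 1 - (1/n) J
    rcases Nat.eq_zero_or_pos n with hn | hn
    · subst hn
      have hz : (C * C.conjTranspose -
          ((0 : ℕ) : ℂ)⁻¹ • Matrix.vecMulVec y (star y)) = 0 := Subsingleton.elim _ _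
      rw [hz]
      exact Matrix.PosSemidef.zero
    · set a : ℂ := (n : ℂ)⁻¹ with ha
      set J : Matrix (Fin n) (Fin n) ℂ := Matrix.of fun _ _ => 1 with hJ
      set P : Matrix (Fin n) (Fin n) ℂ := 1 - a • J with hP
      have hn' : (n : ℂ) ≠ 0 := Nat.cast_ne_zero.mpr hn.ne'
      have hJJ : J * J = (n : ℂ) • J := by
        ext j k
        simp [hJ, Matrix.mul_apply]
      have hPH : P.conjTranspose = P := by
        ext j k
        simp [hP, hJ, ha, Matrix.conjTranspose_apply, Matrix.one_apply, eq_comm,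
          star_inv₀]
      have hQQ : (a • J) * (a • J) = a • J := by
        rw [Matrix.smul_mul, Matrix.mul_smul, hJJ, smul_smul, smul_smul]
        congr 1
        field_simp [ha]
        rw [ha, sq, mul_assoc, inv_mul_cancel₀ hn', mul_one]
      have hPP : P * P = P := by
        rw [hP, Matrix.sub_mul, Matrix.mul_sub, Matrix.mul_sub, Matrix.one_mul,
          Matrix.mul_one, hQQ]
        simp only [one_mul]
        abel
      have hCJ : C * J * C.conjTranspose = Matrix.vecMulVec y (star y) := by
        ext j k
        simp only [Matrix.mul_apply, Matrix.conjTranspose_apply, hJ, Matrix.of_apply,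
          mul_one, Matrix.vecMulVec_apply, Pi.star_apply, hy j, hy k]
        rw [← Finset.mul_sum, star_sum]
      have key2 : C * C.conjTranspose - a • Matrix.vecMulVec y (star y)
          = (C * P) * (C * P).conjTranspose := by
        rw [Matrix.conjTranspose_mul, hPH, Matrix.mul_assoc, ← Matrix.mul_assoc P,
          hPP, ← Matrix.mul_assoc, Matrix.mul_sub, Matrix.mul_smul, Matrix.mul_one,
          Matrix.sub_mul, Matrix.smul_mul, hCJ]
      rw [key2]
      exact Matrix.posSemidef_self_mul_conjTranspose _
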